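/- arXiv:1710.07473 — 2 statements merged into one kernel-verified Lean document; each statement's English description precedes it below -/
import Mathlib

section
/- Let J ∈ ℝ^{n×p} with JᵀJ invertible. Then the block matrix [[I_n + J(JᵀJ)⁻¹Jᵀ, −J], [−Jᵀ, JᵀJ]] ∈ ℝ^{(n+p)×(n+p)} is symmetric positive definite. -/
open scoped Matrix

open Matrix in
lemma posDef_of_posSemidef_of_ker {m : Type*} [Fintype m] {M : Matrix m m ℝ}
    (h : M.PosSemidef) (hk : ∀ x : m → ℝ, M *ᵥ x = 0 → x = 0) : M.PosDef := by
  refine Matrix.posDef_iff_dotProduct_mulVec.mpr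
    ⟨h.1, fun x hx => lt_of_le_of_ne ((Matrix.posSemidef_iff_dotProduct_mulVec.mp h).2 x) fun he => ?_⟩
  exact hx (hk x ((h.dotProduct_mulVec_zero_iff x).mp he.symm))

open scoped MatrixOrder in
/-- For `J` with `JᵀJ` invertible, the block matrix
`[[I + J(JᵀJ)⁻¹Jᵀ, -J], [-Jᵀ, JᵀJ]]` is symmetric positive definite. -/
theorem block_H_plus_T_posdef {n p : ℕ} (J : Matrix (Fin n) (Fin p) ℝ)
    (hJ : IsUnit (Jᵀ * J)) :
    (Matrix.fromBlocks (1 + J * (Jᵀ * J)⁻¹ * Jᵀ) (-J) (-Jᵀ) (Jᵀ * J)).PosDef := by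
  classical
  set K : Matrix (Fin p) (Fin p) ℝ := Jᵀ * J with hK
  have hKpsd : K.PosSemidef := by
    have := Matrix.posSemidef_conjTranspose_mul_self J
    rwa [Matrix.conjTranspose_eq_transpose_of_trivial] at this
  have hKinv : (K⁻¹).PosSemidef := hKpsd.inv
  set S : Matrix (Fin p) (Fin p) ℝ := CFC.sqrt K⁻¹ with hSdef
  have hSS : S * S = K⁻¹ := CFC.sqrt_mul_sqrt_self _ hKinv.nonneg
  have hSherm : Sᴴ = S := (Matrix.LE.le.posSemidef (CFC.sqrt_nonneg K⁻¹)).1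
  set A : Matrix (Fin n ⊕ Fin p) (Fin n ⊕ Fin p) ℝ :=
    Matrix.fromBlocks 1 (-J) (S * Jᵀ) 0 with hA
  have hMA : Matrix.fromBlocks (1 + J * K⁻¹ * Jᵀ) (-J) (-Jᵀ) K = Aᴴ * A := by
    rw [hA, Matrix.fromBlocks_conjTranspose, Matrix.fromBlocks_multiply,
      Matrix.conjTranspose_one, Matrix.conjTranspose_mul, hSherm,
      Matrix.conjTranspose_eq_transpose_of_trivial Jᵀ, Matrix.transpose_transpose]
    simp [Matrix.conjTranspose_eq_transpose_of_trivial, Matrix.mul_assoc, ← hSS, hK]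
    rw [← Matrix.mul_assoc S S, hSS]
  rw [hMA]
  apply posDef_of_posSemidef_of_ker (Matrix.posSemidef_conjTranspose_mul_self A)
  intro v hv
  -- From (Aᴴ * A) *ᵥ v = 0 deduce A *ᵥ v = 0
  have hAv : A *ᵥ v = 0 := by
    have h0 : star (A *ᵥ v) ⬝ᵥ (A *ᵥ v) = 0 := by
      have : star v ⬝ᵥ ((Aᴴ * A) *ᵥ v) = 0 := by rw [hv, dotProduct_zero]
      rwa [← Matrix.mulVec_mulVec, Matrix.dotProduct_mulVec,
        Matrix.vecMul_conjTranspose, star_star] at this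
    exact dotProduct_star_self_eq_zero.mp h0
  set x : Fin n → ℝ := v ∘ Sum.inl with hx
  set y : Fin p → ℝ := v ∘ Sum.inr with hy
  have hvelim : v = Sum.elim x y := by
    funext i; cases i <;> rfl
  rw [hvelim, hA, Matrix.fromBlocks_mulVec] at hAv
  have htop : (1 : Matrix (Fin n) (Fin n) ℝ) *ᵥ x + (-J) *ᵥ y = 0 :=
    funext fun i => congrFun hAv (Sum.inl i)
  have hbot : (S * Jᵀ) *ᵥ x + (0 : Matrix (Fin p) (Fin p) ℝ) *ᵥ y = 0 :=
    funext fun i => congrFun hAv (Sum.inr i)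
  have hxy : x = J *ᵥ y := by
    have := htop
    rw [Matrix.one_mulVec, Matrix.neg_mulVec, add_neg_eq_zero] at this
    exact this
  have hdet : IsUnit K.det := (Matrix.isUnit_iff_isUnit_det K).mp hJ
  have hSJx : S *ᵥ (Jᵀ *ᵥ x) = 0 := by
    have := hbot
    rwa [Matrix.zero_mulVec, add_zero, ← Matrix.mulVec_mulVec] at this
  have hKinvJx : K⁻¹ *ᵥ (Jᵀ *ᵥ x) = 0 := by
    rw [← hSS, ← Matrix.mulVec_mulVec, hSJx, Matrix.mulVec_zero]
  have hJx : Jᵀ *ᵥ x = 0 := by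
    have h1 : K *ᵥ (K⁻¹ *ᵥ (Jᵀ *ᵥ x)) = Jᵀ *ᵥ x := by
      rw [Matrix.mulVec_mulVec, Matrix.mul_nonsing_inv K hdet, Matrix.one_mulVec]
    rw [← h1, hKinvJx, Matrix.mulVec_zero]
  have hKy : K *ᵥ y = 0 := by
    rw [hK, ← Matrix.mulVec_mulVec, ← hxy, hJx]
  have hy0 : y = 0 := by
    have h1 : K⁻¹ *ᵥ (K *ᵥ y) = y := by
      rw [Matrix.mulVec_mulVec, Matrix.nonsing_inv_mul K hdet, Matrix.one_mulVec]
    rw [← h1, hKy, Matrix.mulVec_zero]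
  have hx0 : x = 0 := by rw [hxy, hy0, Matrix.mulVec_zero]
  rw [hvelim, hx0, hy0]
  funext i; cases i <;> rfl
end

section
/- (Lemma 1: sGS sweep equals joint semi-proximal minimization.) Let J : ℝᵖ → ℝ^{m×n} be an injective linear map with adjoint J* (with respect to the Frobenius inner product), let b, X, Y, Eᵏ ∈ ℝ^{m×n}, λ > 0, σ > 0. Define τ^{1/2} = −(J*J)⁻¹(J*(b − X − Eᵏ) + σ⁻¹J*Y), E⁺ = S_{λ/σ}(b + J τ^{1/2} − X + σ⁻¹Y), and τ⁺ = −(J*J)⁻¹(J*(b − X − E⁺) + σ⁻¹J*Y). Let 𝒫 = J(J*J)⁻¹J* : ℝ^{m×n} → ℝ^{m×n}. Then (E⁺, τ⁺) is the unique minimizer over (E, τ) ∈ ℝ^{m×n} × ℝᵖ of the function (E, τ) ↦ λ‖E‖₁ + ⟨Y, b + Jτ − X − E⟩ + (σ/2)‖b + Jτ − X − E‖_F² + (σ/2)⟨E − Eᵏ, 𝒫(E − Eᵏ)⟩. -/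
open scoped Matrix

noncomputable section

/-- Frobenius inner product on real matrices. -/
def finner {m n : ℕ} (A B : Matrix (Fin m) (Fin n) ℝ) : ℝ := ∑ i, ∑ j, A i j * B i j

/-- Frobenius norm. -/
noncomputable def frobNorm {m n : ℕ} (A : Matrix (Fin m) (Fin n) ℝ) : ℝ := Real.sqrt (finner A A)

/-- Entrywise ℓ1 norm of a matrix. -/
def l1Norm {m n : ℕ} (A : Matrix (Fin m) (Fin n) ℝ) : ℝ := ∑ i, ∑ j, |A i j|

/-- Nuclear norm: trace of the PSD square root of XᵀX. -/
noncomputable def nuclearNorm {m n : ℕ} (X : Matrix (Fin m) (Fin n) ℝ) : ℝ :=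
  ((Matrix.posSemidef_conjTranspose_mul_self X).1.eigenvectorUnitary.1 *
    Matrix.diagonal ((RCLike.ofReal : ℝ → ℝ) ∘ (Real.sqrt ·) ∘
      (Matrix.posSemidef_conjTranspose_mul_self X).1.eigenvalues) *
    (star (Matrix.posSemidef_conjTranspose_mul_self X).1.eigenvectorUnitary :
      Matrix (Fin n) (Fin n) ℝ)).trace

/-- Entrywise soft-thresholding operator. -/
noncomputable def softThresh {m n : ℕ} (μ : ℝ) (X : Matrix (Fin m) (Fin n) ℝ) :
    Matrix (Fin m) (Fin n) ℝ :=
  Matrix.of fun i j => Real.sign (X i j) * max (|X i j| - μ) 0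

/-- Spectral norm: the ℓ²→ℓ² operator norm. -/
noncomputable def spectralNorm' {m n : ℕ} (Y : Matrix (Fin m) (Fin n) ℝ) : ℝ :=
  ‖LinearMap.toContinuousLinearMap (Matrix.toEuclideanLin Y)‖

namespace SGSAux

variable {m n : ℕ}

lemma finner_comm (A B : Matrix (Fin m) (Fin n) ℝ) : finner A B = finner B A := by
  simp [finner, mul_comm]

lemma finner_add_left (A B C : Matrix (Fin m) (Fin n) ℝ) :
    finner (A + B) C = finner A C + finner B C := by
  simp [finner, Matrix.add_apply, add_mul, Finset.sum_add_distrib]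

lemma finner_sub_left (A B C : Matrix (Fin m) (Fin n) ℝ) :
    finner (A - B) C = finner A C - finner B C := by
  simp [finner, Matrix.sub_apply, sub_mul, Finset.sum_sub_distrib]

lemma finner_smul_left (c : ℝ) (A B : Matrix (Fin m) (Fin n) ℝ) :
    finner (c • A) B = c * finner A B := by
  simp [finner, Matrix.smul_apply, smul_eq_mul, mul_assoc, Finset.mul_sum]

lemma finner_add_right (A B C : Matrix (Fin m) (Fin n) ℝ) :
    finner A (B + C) = finner A B + finner A C := by
  rw [finner_comm, finner_add_left, finner_comm B, finner_comm C]

lemma finner_sub_right (A B C : Matrix (Fin m) (Fin n) ℝ) :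
    finner A (B - C) = finner A B - finner A C := by
  rw [finner_comm, finner_sub_left, finner_comm B, finner_comm C]

lemma finner_smul_right (c : ℝ) (A B : Matrix (Fin m) (Fin n) ℝ) :
    finner A (c • B) = c * finner A B := by
  rw [finner_comm, finner_smul_left, finner_comm]

lemma finner_self_nonneg (A : Matrix (Fin m) (Fin n) ℝ) : 0 ≤ finner A A := by
  apply Finset.sum_nonneg; intro i _
  exact Finset.sum_nonneg fun j _ => mul_self_nonneg _

lemma finner_self_eq_zero {A : Matrix (Fin m) (Fin n) ℝ} (h : finner A A = 0) : A = 0 := by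
  ext i j
  have h1 : ∀ i ∈ Finset.univ, (0:ℝ) ≤ ∑ j, A i j * A i j :=
    fun i _ => Finset.sum_nonneg fun j _ => mul_self_nonneg _
  have h2 := (Finset.sum_eq_zero_iff_of_nonneg h1).mp h i (Finset.mem_univ i)
  have h3 := (Finset.sum_eq_zero_iff_of_nonneg
    (fun j _ => mul_self_nonneg (A i j))).mp h2 j (Finset.mem_univ j)
  have := mul_self_eq_zero.mp h3
  simpa using this

lemma scalar_prox (lam σ mm e : ℝ) (hlam : 0 < lam) (hσ : 0 < σ) :
    lam * |Real.sign mm * max (|mm| - lam / σ) 0| +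
      σ / 2 * (Real.sign mm * max (|mm| - lam / σ) 0 - mm) ^ 2 +
      σ / 2 * (e - Real.sign mm * max (|mm| - lam / σ) 0) ^ 2 ≤
    lam * |e| + σ / 2 * (e - mm) ^ 2 := by
  have hμ : 0 < lam / σ := div_pos hlam hσ
  have hls : lam = σ * (lam / σ) := by field_simp
  set μ := lam / σ with hμdef
  rcases lt_trichotomy mm 0 with h | h | h
  · rw [Real.sign_of_neg h, abs_of_neg h]
    rcases le_or_gt (-mm) μ with h2 | h2
    · rw [max_eq_right (by linarith)]
      simp only [mul_zero, abs_zero, zero_sub, sub_zero]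
      rw [hls]
      have p1 : 0 ≤ σ * ((e + |e|) * (-mm)) :=
        mul_nonneg hσ.le (mul_nonneg (by linarith [neg_abs_le e]) (by linarith))
      have p2 : 0 ≤ σ * ((μ + mm) * |e|) :=
        mul_nonneg hσ.le (mul_nonneg (by linarith) (abs_nonneg e))
      nlinarith [p1, p2]
    · rw [max_eq_left (by linarith),
        show (-1 : ℝ) * (-mm - μ) = mm + μ by ring,
        abs_of_neg (by linarith : mm + μ < 0)]
      rw [hls]
      have p : 0 ≤ σ * (μ * (e + |e|)) :=
        mul_nonneg hσ.le (mul_nonneg hμ.le (by linarith [neg_abs_le e]))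
      nlinarith [p]
  · subst h
    simp only [Real.sign_zero, zero_mul, abs_zero, mul_zero, zero_sub, sub_zero, sub_zero]
    nlinarith [mul_nonneg hlam.le (abs_nonneg e)]
  · rw [Real.sign_of_pos h, abs_of_pos h, one_mul]
    rcases le_or_gt mm μ with h2 | h2
    · rw [max_eq_right (by linarith)]
      simp only [abs_zero, mul_zero, zero_sub, sub_zero]
      rw [hls]
      have p1 : 0 ≤ σ * ((|e| - e) * mm) :=
        mul_nonneg hσ.le (mul_nonneg (by linarith [le_abs_self e]) h.le)
      have p2 : 0 ≤ σ * ((μ - mm) * |e|) :=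
        mul_nonneg hσ.le (mul_nonneg (by linarith) (abs_nonneg e))
      nlinarith [p1, p2]
    · rw [max_eq_left (by linarith), abs_of_pos (by linarith : (0:ℝ) < mm - μ)]
      rw [hls]
      have p : 0 ≤ σ * (μ * (|e| - e)) :=
        mul_nonneg hσ.le (mul_nonneg hμ.le (by linarith [le_abs_self e]))
      nlinarith [p]

lemma quad_ident (σ : ℝ) (hσ : σ ≠ 0) (Y a u d Pa Pd : Matrix (Fin m) (Fin n) ℝ)
    (h1 : finner Pa Pa = finner a Pa) (h2 : finner Pd Pd = finner d Pd)
    (h3 : finner Pa Pd = finner a Pd) (h3' : finner d Pa = finner a Pd)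
    (h4 : finner u Pa = finner a u) :
    finner Y (a + u - σ⁻¹ • Y) + σ / 2 * finner (a + u - σ⁻¹ • Y) (a + u - σ⁻¹ • Y)
      + σ / 2 * finner d Pd
    = σ / 2 * finner (Pa + Pd - a) (Pa + Pd - a)
      + σ / 2 * finner (u + Pa) (u + Pa) - 1 / (2 * σ) * finner Y Y := by
  have hσ1 : σ * σ⁻¹ = 1 := mul_inv_cancel₀ hσ
  simp only [finner_add_left, finner_add_right, finner_sub_left, finner_sub_right,
    finner_smul_left, finner_smul_right]
  rw [finner_comm Pd Pa, finner_comm a Pa, finner_comm a Pd, finner_comm u a,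
    finner_comm Pa u, finner_comm a Y, finner_comm u Y]
  have c1 : finner Pa a = finner a Pa := finner_comm _ _
  have c2 : finner Pd a = finner a Pd := finner_comm _ _
  have H1 : σ ^ 6 * finner Pa Pa = σ ^ 6 * finner a Pa := by rw [h1]
  have H2 : σ ^ 6 * finner Pd Pd = σ ^ 6 * finner d Pd := by rw [h2]
  have H3 : σ ^ 6 * finner Pa Pd = σ ^ 6 * finner a Pd := by rw [h3]
  have H4 : σ ^ 6 * finner u Pa = σ ^ 6 * finner a u := by rw [h4]
  have C1 : σ ^ 6 * finner Pa a = σ ^ 6 * finner a Pa := by rw [c1]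
  have C2 : σ ^ 6 * finner Pd a = σ ^ 6 * finner a Pd := by rw [c2]
  field_simp
  ring_nf
  rw [h1, h2, h3, h4, c1, c2]; ring

end SGSAux

/-- Lemma 1: one sGS sweep equals joint semi-proximal minimization.
With `Kinv = (J*J)⁻¹`, `τ^{1/2} = -(J*J)⁻¹(J*(b - X - Eᵏ) + σ⁻¹J*Y)`,
`E⁺ = S_{λ/σ}(b + Jτ^{1/2} - X + σ⁻¹Y)`, `τ⁺ = -(J*J)⁻¹(J*(b - X - E⁺) + σ⁻¹J*Y)` and
`𝒫 = J(J*J)⁻¹J*`, the pair `(E⁺, τ⁺)` is the unique minimizer of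
`(E, τ) ↦ λ‖E‖₁ + ⟨Y, b + Jτ - X - E⟩ + (σ/2)‖b + Jτ - X - E‖_F²
  + (σ/2)⟨E - Eᵏ, 𝒫(E - Eᵏ)⟩`. -/
theorem sGS_sweep_eq_joint_minimization {m n p : ℕ}
    (J : (Fin p → ℝ) →ₗ[ℝ] Matrix (Fin m) (Fin n) ℝ) (hJ : Function.Injective J)
    (Jadj : Matrix (Fin m) (Fin n) ℝ →ₗ[ℝ] (Fin p → ℝ))
    (hadj : ∀ (v : Fin p → ℝ) (A : Matrix (Fin m) (Fin n) ℝ),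
      finner (J v) A = ∑ i, v i * Jadj A i)
    (Kinv : (Fin p → ℝ) →ₗ[ℝ] (Fin p → ℝ))
    (hKinv : ∀ v : Fin p → ℝ, Kinv (Jadj (J v)) = v)
    (hKinv' : ∀ v : Fin p → ℝ, Jadj (J (Kinv v)) = v)
    (b X Y Ek : Matrix (Fin m) (Fin n) ℝ) (lam σ : ℝ) (hlam : 0 < lam) (hσ : 0 < σ)
    (τhalf : Fin p → ℝ)
    (hτhalf : τhalf = -(Kinv (Jadj (b - X - Ek) + σ⁻¹ • Jadj Y)))
    (Eplus : Matrix (Fin m) (Fin n) ℝ)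
    (hEplus : Eplus = softThresh (lam / σ) (b + J τhalf - X + σ⁻¹ • Y))
    (τplus : Fin p → ℝ)
    (hτplus : τplus = -(Kinv (Jadj (b - X - Eplus) + σ⁻¹ • Jadj Y)))
    (F : Matrix (Fin m) (Fin n) ℝ × (Fin p → ℝ) → ℝ)
    (hF : ∀ w : Matrix (Fin m) (Fin n) ℝ × (Fin p → ℝ),
      F w = lam * l1Norm w.1 + finner Y (b + J w.2 - X - w.1) +
        (σ / 2) * frobNorm (b + J w.2 - X - w.1) ^ 2 +
        (σ / 2) * finner (w.1 - Ek) (J (Kinv (Jadj (w.1 - Ek))))) :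
    (∀ w : Matrix (Fin m) (Fin n) ℝ × (Fin p → ℝ), F (Eplus, τplus) ≤ F w) ∧
    (∀ w : Matrix (Fin m) (Fin n) ℝ × (Fin p → ℝ),
      (∀ w' : Matrix (Fin m) (Fin n) ℝ × (Fin p → ℝ), F w ≤ F w') → w = (Eplus, τplus)) := by
  classical
  set C : Matrix (Fin m) (Fin n) ℝ := b - X + σ⁻¹ • Y with hC
  set M : Matrix (Fin m) (Fin n) ℝ := b + J τhalf - X + σ⁻¹ • Y with hM
  -- the projection P = J ∘ Kinv ∘ Jadj
  set P : Matrix (Fin m) (Fin n) ℝ → Matrix (Fin m) (Fin n) ℝ :=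
    fun A => J (Kinv (Jadj A)) with hP
  have hPapp : ∀ A, P A = J (Kinv (Jadj A)) := fun A => rfl
  -- self-adjointness of P
  have hsym : ∀ A B, finner (P A) B = finner A (P B) := by
    intro A B
    have key : ∀ u w : Fin p → ℝ, (∑ i, Kinv u i * w i) = finner (J (Kinv u)) (J (Kinv w)) := by
      intro u w
      conv_lhs => rw [← hKinv' w]
      exact (hadj (Kinv u) (J (Kinv w))).symm
    rw [hPapp, hPapp]
    calc finner (J (Kinv (Jadj A))) B = ∑ i, Kinv (Jadj A) i * Jadj B i := hadj _ _
      _ = finner (J (Kinv (Jadj A))) (J (Kinv (Jadj B))) := key _ _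
      _ = finner (J (Kinv (Jadj B))) (J (Kinv (Jadj A))) := SGSAux.finner_comm _ _
      _ = ∑ i, Kinv (Jadj B) i * Jadj A i := (key _ _).symm
      _ = finner (J (Kinv (Jadj B))) A := (hadj _ _).symm
      _ = finner A (J (Kinv (Jadj B))) := SGSAux.finner_comm _ _
  have hPP : ∀ A, P (P A) = P A := by
    intro A
    simp only [hPapp]
    rw [hKinv' (Jadj A)]
  have hPJ : ∀ v, P (J v) = J v := by
    intro v; rw [hPapp, hKinv]
  have hPadd : ∀ A B, P (A + B) = P A + P B := by
    intro A B; simp only [hPapp, map_add]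
  have hPCE : ∀ E : Matrix (Fin m) (Fin n) ℝ,
      P (C - E) = J (Kinv (Jadj (b - X - E) + σ⁻¹ • Jadj Y)) := by
    intro E
    have h1 : C - E = (b - X - E) + σ⁻¹ • Y := by rw [hC]; abel
    rw [hPapp, h1, map_add, map_smul]
  have hJτh : J τhalf = -(P (C - Ek)) := by rw [hτhalf, map_neg, hPCE]
  have hJτp : J τplus = -(P (C - Eplus)) := by rw [hτplus, map_neg, hPCE]
  have hMC : M = C - P (C - Ek) := by rw [hM, hJτh, hC]; abel
  -- key decomposition
  have key : ∀ (E : Matrix (Fin m) (Fin n) ℝ) (τ' : Fin p → ℝ),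
      F (E, τ') = lam * l1Norm E + σ / 2 * finner (E - M) (E - M)
        + σ / 2 * finner (J τ' + P (C - E)) (J τ' + P (C - E))
        - 1 / (2 * σ) * finner Y Y := by
    intro E τ'
    rw [hF (E, τ')]
    dsimp only
    have hfrob : frobNorm (b + J τ' - X - E) ^ 2
        = finner (b + J τ' - X - E) (b + J τ' - X - E) :=
      Real.sq_sqrt (SGSAux.finner_self_nonneg _)
    rw [hfrob]
    have hbE : b + J τ' - X - E = (C - E) + J τ' - σ⁻¹ • Y := by rw [hC]; abel
    have hEM : E - M = (P (C - E) + P (E - Ek)) - (C - E) := by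
      have h' : C - Ek = (C - E) + (E - Ek) := by abel
      rw [hMC, h', hPadd]; abel
    rw [hbE, hEM]
    have hprox : J (Kinv (Jadj (E - Ek))) = P (E - Ek) := (hPapp _).symm
    rw [hprox]
    have Q := SGSAux.quad_ident σ (ne_of_gt hσ) Y (C - E) (J τ') (E - Ek)
      (P (C - E)) (P (E - Ek))
      (by rw [hsym, hPP])
      (by rw [hsym, hPP])
      (by rw [hsym, hPP])
      ((SGSAux.finner_comm _ _).trans (hsym _ _))
      (by rw [SGSAux.finner_comm (J τ') (P (C - E)), hsym, hPJ])
    linarith [Q]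
  -- master inequality
  have master : ∀ (E : Matrix (Fin m) (Fin n) ℝ) (τ' : Fin p → ℝ),
      F (Eplus, τplus) + σ / 2 * finner (E - Eplus) (E - Eplus)
        + σ / 2 * finner (J τ' + P (C - E)) (J τ' + P (C - E)) ≤ F (E, τ') := by
    intro E τ'
    rw [key E τ', key Eplus τplus]
    have hz : J τplus + P (C - Eplus) = 0 := by rw [hJτp, neg_add_cancel]
    rw [hz]
    have hz0 : finner (0 : Matrix (Fin m) (Fin n) ℝ) 0 = 0 := by simp [finner]
    rw [hz0]
    have hEp : ∀ i j, Eplus i j = Real.sign (M i j) * max (|M i j| - lam / σ) 0 := by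
      intro i j; rw [hEplus]; rfl
    have sumle : lam * l1Norm Eplus + σ / 2 * finner (Eplus - M) (Eplus - M)
        + σ / 2 * finner (E - Eplus) (E - Eplus)
        ≤ lam * l1Norm E + σ / 2 * finner (E - M) (E - M) := by
      calc lam * l1Norm Eplus + σ / 2 * finner (Eplus - M) (Eplus - M)
            + σ / 2 * finner (E - Eplus) (E - Eplus)
          = ∑ i, ∑ j, (lam * |Eplus i j| + σ / 2 * (Eplus i j - M i j) ^ 2
              + σ / 2 * (E i j - Eplus i j) ^ 2) := by
            simp only [l1Norm, finner, Matrix.sub_apply, Finset.mul_sum,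
              ← Finset.sum_add_distrib]
            refine Finset.sum_congr rfl fun i _ => Finset.sum_congr rfl fun j _ => by ring
        _ ≤ ∑ i, ∑ j, (lam * |E i j| + σ / 2 * (E i j - M i j) ^ 2) := by
            refine Finset.sum_le_sum fun i _ => Finset.sum_le_sum fun j _ => ?_
            rw [hEp i j]
            exact SGSAux.scalar_prox lam σ (M i j) (E i j) hlam hσ
        _ = lam * l1Norm E + σ / 2 * finner (E - M) (E - M) := by
            simp only [l1Norm, finner, Matrix.sub_apply, Finset.mul_sum,
              ← Finset.sum_add_distrib]
            refine Finset.sum_congr rfl fun i _ => Finset.sum_congr rfl fun j _ => by ring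
    linarith [sumle]
  constructor
  · intro w
    have hm := master w.1 w.2
    have h0a := mul_nonneg (by positivity : (0:ℝ) ≤ σ / 2)
      (SGSAux.finner_self_nonneg (w.1 - Eplus))
    have h0b := mul_nonneg (by positivity : (0:ℝ) ≤ σ / 2)
      (SGSAux.finner_self_nonneg (J w.2 + P (C - w.1)))
    have hw : (w.1, w.2) = w := rfl
    rw [hw] at hm
    linarith
  · intro w hmin
    have hle := hmin (Eplus, τplus)
    have hm := master w.1 w.2
    have hw : (w.1, w.2) = w := rfl
    rw [hw] at hm
    have h0a := SGSAux.finner_self_nonneg (w.1 - Eplus)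
    have h0b := SGSAux.finner_self_nonneg (J w.2 + P (C - w.1))
    have ht1 : finner (w.1 - Eplus) (w.1 - Eplus) = 0 := by
      by_contra hne
      have hpos : 0 < finner (w.1 - Eplus) (w.1 - Eplus) := lt_of_le_of_ne h0a (Ne.symm hne)
      have hp1 := mul_pos (by positivity : (0:ℝ) < σ / 2) hpos
      have hp2 := mul_nonneg (by positivity : (0:ℝ) ≤ σ / 2) h0b
      linarith
    have ht2 : finner (J w.2 + P (C - w.1)) (J w.2 + P (C - w.1)) = 0 := by
      by_contra hne
      have hpos : 0 < finner (J w.2 + P (C - w.1)) (J w.2 + P (C - w.1)) :=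
        lt_of_le_of_ne h0b (Ne.symm hne)
      have hp1 := mul_pos (by positivity : (0:ℝ) < σ / 2) hpos
      have hp2 := mul_nonneg (by positivity : (0:ℝ) ≤ σ / 2) h0a
      linarith
    have hE : w.1 = Eplus := by
      have := SGSAux.finner_self_eq_zero ht1
      rwa [sub_eq_zero] at this
    have hτ0 : J w.2 + P (C - w.1) = 0 := SGSAux.finner_self_eq_zero ht2
    rw [hE] at hτ0
    have hJw : J w.2 = J τplus := by
      rw [hJτp]
      exact eq_neg_of_add_eq_zero_left hτ0
    have hτ : w.2 = τplus := hJ hJw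
    exact Prod.ext hE hτ
end
end
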